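/- Composition of generalized Laplace and generalized Fourier sine transforms: L_{α,μ}{ F_{s,δ,μ}{f(t); x}; y } = (1/μ) Γ(α/μ) ∫₀^∞ t^{δ-1} (y^{2μ} + t^{2μ})^{-α/(2μ)} sin[(α/μ) arctan(t^μ/y^μ)] f(t) dt, i.e., ∫₀^∞ x^{α-1} e^{-y^μ x^μ} (∫₀^∞ t^{δ-1} sin(x^μ t^μ) f(t) dt) dx equals the right-hand side. -/

import Mathlib

open MeasureTheory Set

open Filter Complex in
private lemma aux_integrable_rpow_exp {s b : ℝ} (hs : -1 < s) (hb : 0 < b) :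
    IntegrableOn (fun t : ℝ => t ^ s * Real.exp (-(b * t))) (Ioi 0) := by
  have h := integrableOn_rpow_mul_exp_neg_mul_rpow (p := 1) (s := s) (b := b) hs one_pos hb
  refine h.congr_fun (fun x _ => ?_) measurableSet_Ioi
  simp only [Real.rpow_one, neg_mul]

open Filter Complex in
private lemma aux_aesm {s : ℝ} (z : ℂ) :
    AEStronglyMeasurable (fun t : ℝ => (t : ℂ) ^ ((s : ℂ) - 1) * Complex.exp (-(z * t)))
      (volume.restrict (Ioi 0)) := by
  refine ContinuousOn.aestronglyMeasurable (ContinuousOn.mul ?_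
    (Continuous.continuousOn (Complex.continuous_exp.comp
      ((continuous_const.mul Complex.continuous_ofReal).neg)))) measurableSet_Ioi
  intro t ht
  have ht' : (0:ℝ) < t := ht
  exact ((continuousAt_cpow_const (Or.inl (by simpa using ht'))).comp
    Complex.continuous_ofReal.continuousAt).continuousWithinAt

open Filter Complex in
private lemma aux_aesm' {s : ℝ} (z : ℂ) :
    AEStronglyMeasurable
      (fun t : ℝ => (t : ℂ) ^ ((s : ℂ) - 1) * (Complex.exp (-(z * t)) * -(t : ℂ)))
      (volume.restrict (Ioi 0)) := by
  refine ContinuousOn.aestronglyMeasurable (ContinuousOn.mul ?_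
    (Continuous.continuousOn ((Complex.continuous_exp.comp
      ((continuous_const.mul Complex.continuous_ofReal).neg)).mul
      Complex.continuous_ofReal.neg))) measurableSet_Ioi
  intro t ht
  have ht' : (0:ℝ) < t := ht
  exact ((continuousAt_cpow_const (Or.inl (by simpa using ht'))).comp
    Complex.continuous_ofReal.continuousAt).continuousWithinAt

open Filter Complex in
private lemma aux_norm {s : ℝ} (z : ℂ) {t : ℝ} (ht : 0 < t) :
    ‖(t : ℂ) ^ ((s : ℂ) - 1) * Complex.exp (-(z * t))‖
      = t ^ (s - 1) * Real.exp (-(z.re * t)) := by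
  rw [norm_mul,
    Complex.norm_cpow_eq_rpow_re_of_pos ht, Complex.norm_exp]
  norm_num

open Filter Complex in
private lemma aux_integrable_claplace {s : ℝ} (hs : 0 < s) {z : ℂ} (hz : 0 < z.re) :
    IntegrableOn (fun t : ℝ => (t : ℂ) ^ ((s : ℂ) - 1) * Complex.exp (-(z * t))) (Ioi 0) := by
  refine (aux_integrable_rpow_exp (s := s - 1) (b := z.re) (by linarith) hz).mono'
    (aux_aesm z) ?_
  filter_upwards [ae_restrict_mem measurableSet_Ioi] with t ht
  rw [aux_norm z ht]

open Filter Complex in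
private lemma claplace_cpow {s : ℝ} (hs : 0 < s) :
    ∀ z : ℂ, 0 < z.re →
      ∫ t in Ioi (0:ℝ), (t : ℂ) ^ ((s : ℂ) - 1) * Complex.exp (-(z * t))
        = Complex.Gamma s * z ^ (-(s : ℂ)) := by
  set U : Set ℂ := {z | 0 < z.re} with hU
  have hUopen : IsOpen U := isOpen_lt continuous_const Complex.continuous_re
  set F : ℂ → ℂ := fun z => ∫ t in Ioi (0:ℝ), (t : ℂ) ^ ((s : ℂ) - 1) * Complex.exp (-(z * t))
    with hFdef
  set G : ℂ → ℂ := fun z => Complex.Gamma s * z ^ (-(s : ℂ)) with hGdef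
  have hdF : DifferentiableOn ℂ F U := by
    intro z₀ hz₀
    have hre : (0:ℝ) < z₀.re := hz₀
    set ε : ℝ := z₀.re / 2 with hε
    have hεpos : 0 < ε := by positivity
    have hball : ∀ z ∈ Metric.ball z₀ ε, ε < z.re := by
      intro z hz
      have h1 : |(z - z₀).re| ≤ ‖z - z₀‖ := Complex.abs_re_le_norm _
      rw [Metric.mem_ball, Complex.dist_eq] at hz
      have h2 := (abs_lt.mp (lt_of_le_of_lt h1 hz)).1
      rw [Complex.sub_re] at h2
      have h3 : z₀.re = 2 * ε := by rw [hε]; ring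
      linarith
    have key := hasDerivAt_integral_of_dominated_loc_of_deriv_le
      (F := fun z (t : ℝ) => (t : ℂ) ^ ((s : ℂ) - 1) * Complex.exp (-(z * t)))
      (F' := fun z (t : ℝ) => (t : ℂ) ^ ((s : ℂ) - 1) * (Complex.exp (-(z * t)) * -(t : ℂ)))
      (μ := volume.restrict (Ioi 0)) (x₀ := z₀)
      (bound := fun t : ℝ => t ^ s * Real.exp (-(ε * t))) (Metric.ball_mem_nhds z₀ hεpos)
      (Eventually.of_forall fun z => aux_aesm z)
      (aux_integrable_claplace hs hre)
      (aux_aesm' z₀)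
      ?_ ?_ ?_
    · exact key.2.differentiableAt.differentiableWithinAt
    · filter_upwards [ae_restrict_mem measurableSet_Ioi] with t ht z hz
      have ht' : (0:ℝ) < t := ht
      have hnorm : ‖(t : ℂ) ^ ((s : ℂ) - 1) * (Complex.exp (-(z * t)) * -(t : ℂ))‖
          = t ^ s * Real.exp (-(z.re * t)) := by
        rw [norm_mul, norm_mul, norm_neg,
          Complex.norm_cpow_eq_rpow_re_of_pos ht', Complex.norm_exp,
          Complex.norm_real, Real.norm_eq_abs, abs_of_pos ht']
        have h1 : (-(z * (t:ℂ))).re = -(z.re * t) := by simp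
        have h2 : ((s:ℂ) - 1).re = s - 1 := by simp
        have h3 : t ^ (s - 1) * t = t ^ s := by
          rw [← Real.rpow_add_one ht'.ne']; ring_nf
        rw [h1, h2, ← mul_assoc, mul_comm (t ^ (s-1)) (Real.exp (-(z.re * t))),
          mul_assoc, h3]
        ring
      rw [hnorm]
      have hle : Real.exp (-(z.re * t)) ≤ Real.exp (-(ε * t)) := by
        apply Real.exp_le_exp.mpr
        nlinarith [hball z hz]
      exact mul_le_mul_of_nonneg_left hle (Real.rpow_nonneg ht'.le s)
    · exact aux_integrable_rpow_exp (by linarith) hεpos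
    · filter_upwards [ae_restrict_mem measurableSet_Ioi] with t _ z _
      have h := (((hasDerivAt_id z).mul_const (t:ℂ)).neg.cexp).const_mul
        ((t : ℂ) ^ ((s : ℂ) - 1))
      simpa using h
  have hdG : DifferentiableOn ℂ G U := by
    intro z hz
    have hz' : z ∈ Complex.slitPlane := Or.inl hz
    exact ((differentiableAt_id.cpow (differentiableAt_const _) hz').const_mul
      _).differentiableWithinAt
  have hFa : AnalyticOnNhd ℂ F U := hdF.analyticOnNhd hUopen
  have hGa : AnalyticOnNhd ℂ G U := hdG.analyticOnNhd hUopen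
  have hUconn : IsPreconnected U := (convex_halfSpace_re_gt 0).isPreconnected
  have hreal : ∀ r : ℝ, 0 < r → F (r : ℂ) = G (r : ℂ) := by
    intro r hr
    have h := Complex.integral_cpow_mul_exp_neg_mul_Ioi (a := (s : ℂ))
      (by simpa using hs) hr
    have harg : Complex.arg (r : ℂ) ≠ Real.pi := by
      rw [Complex.arg_ofReal_of_nonneg hr.le]
      exact fun hc => Real.pi_ne_zero hc.symm
    have hF : F (r : ℂ) = (1 / (r:ℂ)) ^ (s:ℂ) * Complex.Gamma s := h
    rw [hF, hGdef]
    rw [one_div, Complex.inv_cpow _ _ harg, ← Complex.cpow_neg, mul_comm]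
  have hfreq : ∃ᶠ z in nhdsWithin (1 : ℂ) {(1:ℂ)}ᶜ, F z = G z := by
    have htt : Tendsto (fun n : ℕ => ((1 + (n + 1 : ℝ)⁻¹ : ℝ) : ℂ)) atTop
        (nhdsWithin (1 : ℂ) {(1:ℂ)}ᶜ) := by
      apply tendsto_nhdsWithin_of_tendsto_nhds_of_eventually_within
      · have h0 : Tendsto (fun n : ℕ => (1 + (n + 1 : ℝ)⁻¹ : ℝ)) atTop (nhds 1) := by
          have h1 := tendsto_one_div_add_atTop_nhds_zero_nat (𝕜 := ℝ)
          simp only [one_div] at h1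
          simpa using (tendsto_const_nhds (x := (1:ℝ))).add h1
        have h2 := (Complex.continuous_ofReal.tendsto (1:ℝ)).comp h0
        exact h2
      · filter_upwards with n
        simp only [mem_compl_iff, mem_singleton_iff]
        intro hcon
        have h4 : (1 + ((n:ℝ) + 1)⁻¹ : ℝ) = 1 := by exact_mod_cast hcon
        have h5 : ((n:ℝ) + 1)⁻¹ = 0 := by linarith
        exact (inv_ne_zero (by positivity : ((n:ℝ) + 1) ≠ 0)) h5
    exact htt.frequently (Filter.Frequently.of_forall fun n =>
      hreal _ (by positivity))
  have heq := hFa.eqOn_of_preconnected_of_frequently_eq hGa hUconn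
    (show (1:ℂ) ∈ U by simp [hU]) hfreq
  exact fun z hz => heq hz

open Complex in
private lemma laplace_sin_real {s b : ℝ} (hs : 0 < s) (hb : 0 < b) (c : ℝ) :
    ∫ u in Ioi (0:ℝ), u ^ (s - 1) * Real.exp (-(b * u)) * Real.sin (c * u)
      = Real.Gamma s * (b ^ 2 + c ^ 2) ^ (-(s / 2)) * Real.sin (s * Real.arctan (c / b)) := by
  set z : ℂ := (b : ℂ) - (c : ℂ) * Complex.I with hzdef
  have hzre : z.re = b := by simp [hzdef]
  have hzim : z.im = -c := by simp [hzdef]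
  have hz : 0 < z.re := by rwa [hzre]
  have key := claplace_cpow hs z hz
  have hint := aux_integrable_claplace hs hz
  have him : (∫ u in Ioi (0:ℝ), ((u : ℂ) ^ ((s : ℂ) - 1) * Complex.exp (-(z * u))).im)
      = (Complex.Gamma (s:ℂ) * z ^ (-(s:ℂ))).im := by
    have h0 := integral_im hint
    simp only [RCLike.im_to_complex] at h0
    rw [h0, key]
  have hL : ∫ u in Ioi (0:ℝ), ((u : ℂ) ^ ((s : ℂ) - 1) * Complex.exp (-(z * u))).im
      = ∫ u in Ioi (0:ℝ), u ^ (s - 1) * Real.exp (-(b * u)) * Real.sin (c * u) := by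
    refine setIntegral_congr_fun measurableSet_Ioi (fun u hu => ?_)
    have hu' : (0:ℝ) < u := hu
    have h1 : (u : ℂ) ^ ((s : ℂ) - 1) = ((u ^ (s - 1) : ℝ) : ℂ) := by
      rw [Complex.ofReal_cpow hu'.le]
      push_cast
      ring_nf
    have h2 : (-(z * u)).re = -(b * u) := by simp [hzdef]
    have h3 : (-(z * u)).im = c * u := by simp [hzdef]
    rw [h1]
    simp only [Complex.mul_im, Complex.ofReal_re, Complex.ofReal_im, zero_mul, add_zero]
    rw [Complex.exp_im, h2, h3]
    ring
  rw [hL] at him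
  rw [him]
  have hzne : z ≠ 0 := by
    intro h
    rw [h] at hzre
    simp at hzre
    linarith
  have habs : ‖z‖ = Real.sqrt (b ^ 2 + c ^ 2) := by
    rw [Complex.norm_def, Complex.normSq_apply, hzre, hzim]
    ring_nf
  have harg : Complex.arg z = -Real.arctan (c / b) := by
    rw [Complex.arg_of_re_nonneg (by rw [hzre]; exact hb.le), hzim, habs,
      Real.arctan_eq_arcsin, ← Real.arcsin_neg]
    congr 1
    have hs1 : Real.sqrt (1 + (c / b) ^ 2) = Real.sqrt (b ^ 2 + c ^ 2) / b := by
      rw [eq_div_iff hb.ne']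
      rw [show Real.sqrt (b^2+c^2) = Real.sqrt ((1 + (c/b)^2) * b^2) by congr 1; field_simp]
      rw [Real.sqrt_mul (by positivity), Real.sqrt_sq hb.le]
    rw [hs1]
    rw [div_div_eq_mul_div, div_mul_eq_mul_div, mul_comm]
    rw [mul_div_assoc, mul_comm, mul_div_assoc]
    field_simp
  have hGam : Complex.Gamma (s : ℂ) = ((Real.Gamma s : ℝ) : ℂ) := Complex.Gamma_ofReal s
  rw [hGam]
  simp only [Complex.mul_im, Complex.ofReal_re, Complex.ofReal_im, zero_mul, add_zero]
  rw [mul_assoc]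
  congr 1
  rw [Complex.cpow_def_of_ne_zero hzne, Complex.exp_im]
  have hre2 : (Complex.log z * -(s:ℂ)).re = Real.log ‖z‖ * (-s) := by
    simp [Complex.log_re, Complex.log_im]
  have him2 : (Complex.log z * -(s:ℂ)).im = s * Real.arctan (c / b) := by
    simp only [Complex.mul_im, Complex.log_im, Complex.log_re]
    rw [harg]
    simp
    ring
  rw [hre2, him2]
  have habspos : 0 < ‖z‖ := norm_pos_iff.mpr hzne
  have h5 : Real.exp (Real.log ‖z‖ * (-s)) = ‖z‖ ^ (-s) := by
    rw [Real.rpow_def_of_pos habspos]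
  rw [h5, habs]
  have h6 : Real.sqrt (b ^ 2 + c ^ 2) ^ (-s) = (b ^ 2 + c ^ 2) ^ (-(s / 2)) := by
    rw [Real.sqrt_eq_rpow, ← Real.rpow_mul (by positivity)]
    congr 1
    ring
  rw [h6]

theorem laplace_fourier_sine_composition (α δ μ y : ℝ) (f : ℝ → ℝ)
    (hμ : 0 < μ) (hα : μ < α) (hy : 0 < y) (hf : Measurable f)
    (habs : IntegrableOn (fun t => t ^ (δ - 1) * f t) (Ioi 0))
    (hint : IntegrableOn
      (fun p : ℝ × ℝ =>
        p.1 ^ (α - 1) * Real.exp (-(y ^ μ * p.1 ^ μ)) *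
          (p.2 ^ (δ - 1) * Real.sin (p.1 ^ μ * p.2 ^ μ) * f p.2))
      (Ioi 0 ×ˢ Ioi 0)) :
    ∫ x in Ioi (0:ℝ), x ^ (α - 1) * Real.exp (-(y ^ μ * x ^ μ)) *
        ∫ t in Ioi (0:ℝ), t ^ (δ - 1) * Real.sin (x ^ μ * t ^ μ) * f t
      = (1 / μ) * Real.Gamma (α / μ) *
        ∫ t in Ioi (0:ℝ), t ^ (δ - 1) * (y ^ (2 * μ) + t ^ (2 * μ)) ^ (-(α / (2 * μ))) *
          Real.sin ((α / μ) * Real.arctan (t ^ μ / y ^ μ)) * f t := by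
  have hα0 : 0 < α := lt_trans hμ hα
  set s : ℝ := α / μ with hsdef
  have hspos : 0 < s := div_pos hα0 hμ
  have hb : 0 < y ^ μ := Real.rpow_pos_of_pos hy μ
  have hswap : (∫ x in Ioi (0:ℝ), ∫ t in Ioi (0:ℝ),
        x ^ (α - 1) * Real.exp (-(y ^ μ * x ^ μ)) *
          (t ^ (δ - 1) * Real.sin (x ^ μ * t ^ μ) * f t))
      = ∫ t in Ioi (0:ℝ), ∫ x in Ioi (0:ℝ),
        x ^ (α - 1) * Real.exp (-(y ^ μ * x ^ μ)) *
          (t ^ (δ - 1) * Real.sin (x ^ μ * t ^ μ) * f t) := by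
    apply integral_integral_swap
    rw [Measure.prod_restrict, ← Measure.volume_eq_prod]
    exact hint
  calc ∫ x in Ioi (0:ℝ), x ^ (α - 1) * Real.exp (-(y ^ μ * x ^ μ)) *
        ∫ t in Ioi (0:ℝ), t ^ (δ - 1) * Real.sin (x ^ μ * t ^ μ) * f t
      = ∫ x in Ioi (0:ℝ), ∫ t in Ioi (0:ℝ),
          x ^ (α - 1) * Real.exp (-(y ^ μ * x ^ μ)) *
            (t ^ (δ - 1) * Real.sin (x ^ μ * t ^ μ) * f t) := by
        refine setIntegral_congr_fun measurableSet_Ioi fun x _ => ?_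
        exact (integral_const_mul _ _).symm
    _ = ∫ t in Ioi (0:ℝ), ∫ x in Ioi (0:ℝ),
          x ^ (α - 1) * Real.exp (-(y ^ μ * x ^ μ)) *
            (t ^ (δ - 1) * Real.sin (x ^ μ * t ^ μ) * f t) := hswap
    _ = ∫ t in Ioi (0:ℝ), (1 / μ * Real.Gamma s) *
          (t ^ (δ - 1) * (y ^ (2 * μ) + t ^ (2 * μ)) ^ (-(α / (2 * μ))) *
            Real.sin (s * Real.arctan (t ^ μ / y ^ μ)) * f t) := by
        refine setIntegral_congr_fun measurableSet_Ioi fun t ht => ?_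
        have htp : (0:ℝ) < t := ht
        have hcpos : 0 < t ^ μ := Real.rpow_pos_of_pos htp μ
        -- rewrite integrand pulling out constants in t
        have hstep1 : (∫ x in Ioi (0:ℝ),
              x ^ (α - 1) * Real.exp (-(y ^ μ * x ^ μ)) *
                (t ^ (δ - 1) * Real.sin (x ^ μ * t ^ μ) * f t))
            = (t ^ (δ - 1) * f t) * ∫ x in Ioi (0:ℝ),
                x ^ (α - 1) * Real.exp (-(y ^ μ * x ^ μ)) * Real.sin (t ^ μ * x ^ μ) := by
          rw [← integral_const_mul]
          refine setIntegral_congr_fun measurableSet_Ioi fun x _ => ?_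
          rw [mul_comm (x ^ μ) (t ^ μ)]
          ring
        -- the substitution x ↦ x ^ μ
        have hsub := integral_comp_rpow_Ioi_of_pos
          (g := fun u : ℝ => u ^ (s - 1) * Real.exp (-(y ^ μ * u)) * Real.sin (t ^ μ * u)) hμ
        rw [laplace_sin_real hspos hb (t ^ μ)] at hsub
        have heq : ∀ x ∈ Ioi (0:ℝ), (μ * x ^ (μ - 1)) •
              ((x ^ μ) ^ (s - 1) * Real.exp (-(y ^ μ * x ^ μ)) * Real.sin (t ^ μ * x ^ μ))
            = μ * (x ^ (α - 1) * Real.exp (-(y ^ μ * x ^ μ)) * Real.sin (t ^ μ * x ^ μ)) := by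
          intro x hx
          have hxp : (0:ℝ) < x := hx
          have h1 : (x ^ μ) ^ (s - 1) = x ^ (μ * (s - 1)) := (Real.rpow_mul hxp.le μ (s - 1)).symm
          have h2 : μ * (s - 1) = α - μ := by
            rw [hsdef]; field_simp
          have h3 : x ^ (μ - 1) * x ^ (α - μ) = x ^ (α - 1) := by
            rw [← Real.rpow_add hxp]; ring_nf
          rw [smul_eq_mul, h1, h2]
          calc μ * x ^ (μ - 1) *
                (x ^ (α - μ) * Real.exp (-(y ^ μ * x ^ μ)) * Real.sin (t ^ μ * x ^ μ))
              = μ * ((x ^ (μ - 1) * x ^ (α - μ)) * Real.exp (-(y ^ μ * x ^ μ)) *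
                  Real.sin (t ^ μ * x ^ μ)) := by ring
            _ = μ * (x ^ (α - 1) * Real.exp (-(y ^ μ * x ^ μ)) * Real.sin (t ^ μ * x ^ μ)) := by
                rw [h3]
        rw [setIntegral_congr_fun measurableSet_Ioi heq, integral_const_mul] at hsub
        have hJ : (∫ x in Ioi (0:ℝ),
              x ^ (α - 1) * Real.exp (-(y ^ μ * x ^ μ)) * Real.sin (t ^ μ * x ^ μ))
            = (1 / μ) * (Real.Gamma s * ((y ^ μ) ^ 2 + (t ^ μ) ^ 2) ^ (-(s / 2)) *
                Real.sin (s * Real.arctan (t ^ μ / y ^ μ))) := by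
          rw [← hsub]
          field_simp
          simp only [mul_comm (t ^ μ)]
        rw [hstep1, hJ]
        have hy2 : (y ^ μ) ^ 2 = y ^ (2 * μ) := by
          rw [← Real.rpow_natCast (y ^ μ) 2, ← Real.rpow_mul hy.le]
          norm_num [mul_comm]
        have ht2 : (t ^ μ) ^ 2 = t ^ (2 * μ) := by
          rw [← Real.rpow_natCast (t ^ μ) 2, ← Real.rpow_mul htp.le]
          norm_num [mul_comm]
        have hexp : -(s / 2) = -(α / (2 * μ)) := by
          rw [hsdef]; ring
        rw [hy2, ht2, hexp]
        ring
    _ = (1 / μ) * Real.Gamma s *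
          ∫ t in Ioi (0:ℝ), t ^ (δ - 1) * (y ^ (2 * μ) + t ^ (2 * μ)) ^ (-(α / (2 * μ))) *
            Real.sin (s * Real.arctan (t ^ μ / y ^ μ)) * f t := by
        rw [integral_const_mul]
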